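/- arXiv:1910.04833 — 2 statements merged into one kernel-verified Lean document; each statement's English description precedes it below -/
import Mathlib

section
/- For positive definite n×n matrices A and B, Tr((A^(1/2) B A^(1/2))^(1/2)) ≥ Tr(A^(1/2) B^(1/2)); consequently the Bures-Wasserstein distance d_b(A,B) = (Tr(A+B) - 2Tr((A^(1/2)BA^(1/2))^(1/2)))^(1/2) is at most the Hellinger distance d_h(A,B) = (Tr(A+B) - 2Tr(A^(1/2)B^(1/2)))^(1/2). -/
open Matrix ComplexOrder

/-- Matrix power via functional calculus (spectral decomposition), for Hermitian matrices. -/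
noncomputable def mpow {n : Type*} [Fintype n] [DecidableEq n]
    (A : Matrix n n ℂ) (p : ℝ) : Matrix n n ℂ :=
  if hA : A.IsHermitian then
    (hA.eigenvectorUnitary : Matrix n n ℂ) *
      Matrix.diagonal (fun i => ((hA.eigenvalues i ^ p : ℝ) : ℂ)) *
      star (hA.eigenvectorUnitary : Matrix n n ℂ)
  else 0

/-- Hellinger distance. -/
noncomputable def dh {n : Type*} [Fintype n] [DecidableEq n]
    (A B : Matrix n n ℂ) : ℝ :=
  Real.sqrt ((Matrix.trace (A + B)).re
    - 2 * (Matrix.trace (mpow A (1/2) * mpow B (1/2))).re)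

/-- Bures–Wasserstein distance. -/
noncomputable def db {n : Type*} [Fintype n] [DecidableEq n]
    (A B : Matrix n n ℂ) : ℝ :=
  Real.sqrt ((Matrix.trace (A + B)).re
    - 2 * (Matrix.trace (mpow (mpow A (1/2) * B * mpow A (1/2)) (1/2))).re)

/-- Log-determinant distance. -/
noncomputable def dl {n : Type*} [Fintype n] [DecidableEq n]
    (A B : Matrix n n ℂ) : ℝ :=
  Real.log (((A + B) / 2).det).re
    - (1/2) * (Real.log (A.det.re) + Real.log (B.det.re))

/-- Matrix power mean μ_p(t;A,B) = (t A^p + (1-t) B^p)^{1/p}. -/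
noncomputable def mpm {n : Type*} [Fintype n] [DecidableEq n]
    (p t : ℝ) (A B : Matrix n n ℂ) : Matrix n n ℂ :=
  mpow ((t : ℂ) • mpow A p + ((1 - t : ℝ) : ℂ) • mpow B p) (1/p)

/-- Weighted geometric mean A ♯_t B. -/
noncomputable def sharp {n : Type*} [Fintype n] [DecidableEq n]
    (t : ℝ) (A B : Matrix n n ℂ) : Matrix n n ℂ :=
  mpow A (1/2) * mpow (mpow A (-(1/2)) * B * mpow A (-(1/2))) t * mpow A (1/2)

/-- Quantum fidelity. -/
noncomputable def fid {n : Type*} [Fintype n] [DecidableEq n]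
    (A B : Matrix n n ℂ) : ℝ :=
  ((Matrix.trace (mpow (mpow A (1/2) * B * mpow A (1/2)) (1/2))).re) ^ 2

section Aux

variable {n : Type*} [Fintype n] [DecidableEq n]

lemma mpow_eq {A : Matrix n n ℂ} (hA : A.IsHermitian) (p : ℝ) :
    mpow A p = (hA.eigenvectorUnitary : Matrix n n ℂ) *
      Matrix.diagonal (fun i => ((hA.eigenvalues i ^ p : ℝ) : ℂ)) *
      star (hA.eigenvectorUnitary : Matrix n n ℂ) := dif_pos hA

lemma mpow_isHermitian {A : Matrix n n ℂ} (hA : A.IsHermitian) (p : ℝ) :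
    (mpow A p).IsHermitian := by
  rw [mpow_eq hA p, Matrix.star_eq_conjTranspose]
  exact Matrix.isHermitian_mul_mul_conjTranspose _
    (Matrix.isHermitian_diagonal_of_self_adjoint _
      (funext fun i => by simp [star, Complex.ext_iff]))

lemma mpow_mul_mpow {A : Matrix n n ℂ} (hA : A.PosDef) (p q : ℝ) :
    mpow A p * mpow A q = mpow A (p + q) := by
  have h1 : star (hA.1.eigenvectorUnitary : Matrix n n ℂ) *
      (hA.1.eigenvectorUnitary : Matrix n n ℂ) = 1 :=
    Matrix.mem_unitaryGroup_iff'.mp (hA.1.eigenvectorUnitary).2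
  rw [mpow_eq hA.1 p, mpow_eq hA.1 q, mpow_eq hA.1 (p + q)]
  simp only [mul_assoc]
  rw [← mul_assoc (star (hA.1.eigenvectorUnitary : Matrix n n ℂ))
      (hA.1.eigenvectorUnitary : Matrix n n ℂ), h1, one_mul,
    ← mul_assoc (Matrix.diagonal _) (Matrix.diagonal _), Matrix.diagonal_mul_diagonal]
  have : ∀ i, ((hA.1.eigenvalues i ^ p : ℝ) : ℂ) * ((hA.1.eigenvalues i ^ q : ℝ) : ℂ)
      = ((hA.1.eigenvalues i ^ (p + q) : ℝ) : ℂ) := fun i => by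
    rw [← Complex.ofReal_mul, ← Real.rpow_add (hA.eigenvalues_pos i)]
  simp only [this]

lemma mpow_zero {A : Matrix n n ℂ} (hA : A.IsHermitian) : mpow A 0 = 1 := by
  have h1 : (hA.eigenvectorUnitary : Matrix n n ℂ) *
      star (hA.eigenvectorUnitary : Matrix n n ℂ) = 1 :=
    Matrix.mem_unitaryGroup_iff.mp (hA.eigenvectorUnitary).2
  rw [mpow_eq hA 0]
  simp only [Real.rpow_zero, Complex.ofReal_one]
  rw [Matrix.diagonal_one, mul_one, h1]

lemma mpow_one {A : Matrix n n ℂ} (hA : A.IsHermitian) : mpow A 1 = A := by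
  rw [mpow_eq hA 1]
  simp only [Real.rpow_one]
  exact (hA.spectral_theorem).symm

lemma posDef_conj {B C : Matrix n n ℂ} (hB : B.PosDef) (hC : IsUnit C) :
    (C * B * Cᴴ).PosDef := by
  refine Matrix.PosDef.of_dotProduct_mulVec_pos (Matrix.isHermitian_mul_mul_conjTranspose _ hB.1) fun x hx => ?_
  have hCH : IsUnit Cᴴ := by
    rw [Matrix.isUnit_iff_isUnit_det, Matrix.det_conjTranspose, isUnit_iff_ne_zero] at *
    simpa using hC
  have hy : Cᴴ *ᵥ x ≠ 0 :=
    (Matrix.mulVec_injective_iff_isUnit.mpr hCH).ne_iff' (Matrix.mulVec_zero _) |>.2 hx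
  have key : star x ⬝ᵥ ((C * B * Cᴴ) *ᵥ x)
      = star (Cᴴ *ᵥ x) ⬝ᵥ (B *ᵥ (Cᴴ *ᵥ x)) := by
    rw [← Matrix.mulVec_mulVec, ← Matrix.mulVec_mulVec, Matrix.star_mulVec,
      Matrix.conjTranspose_conjTranspose, Matrix.dotProduct_mulVec (star x) C]
  rw [key]
  exact hB.dotProduct_mulVec_pos hy

lemma mpow_posDef {A : Matrix n n ℂ} (hA : A.PosDef) (p : ℝ) :
    (mpow A p).PosDef := by
  rw [mpow_eq hA.1 p, Matrix.star_eq_conjTranspose]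
  refine posDef_conj (Matrix.PosDef.diagonal fun i => ?_) ?_
  · exact_mod_cast Complex.zero_lt_real.mpr (Real.rpow_pos_of_pos (hA.eigenvalues_pos i) p)
  · exact ⟨⟨_, star (hA.1.eigenvectorUnitary : Matrix n n ℂ),
      Matrix.mem_unitaryGroup_iff.mp (hA.1.eigenvectorUnitary).2,
      Matrix.mem_unitaryGroup_iff'.mp (hA.1.eigenvectorUnitary).2⟩, rfl⟩

lemma trace_conj_self_re (P : Matrix n n ℂ) :
    (Matrix.trace (Pᴴ * P)).re = ∑ p : n × n, ‖P p.1 p.2‖ ^ 2 := by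
  rw [Fintype.sum_prod_type]
  rw [Finset.sum_comm]
  simp only [Matrix.trace, Matrix.diag, Matrix.mul_apply, Matrix.conjTranspose_apply,
    Complex.re_sum]
  refine Finset.sum_congr rfl fun i _ => Finset.sum_congr rfl fun j _ => ?_
  rw [show (star (P j i) : ℂ) = starRingEnd ℂ (P j i) from rfl,
    ← Complex.normSq_eq_conj_mul_self]
  rw [Complex.ofReal_re, Complex.normSq_eq_norm_sq]

lemma trace_cs (P Q : Matrix n n ℂ) :
    ‖Matrix.trace (P * Q)‖
      ≤ Real.sqrt (Matrix.trace (Pᴴ * P)).re * Real.sqrt (Matrix.trace (Qᴴ * Q)).re := by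
  let u : EuclideanSpace ℂ (n × n) := WithLp.toLp 2 (fun p : n × n => star (P p.1 p.2))
  let v : EuclideanSpace ℂ (n × n) := WithLp.toLp 2 (fun p : n × n => Q p.2 p.1)
  have hinner : (inner ℂ u v : ℂ) = Matrix.trace (P * Q) := by
    simp only [PiLp.inner_apply, RCLike.inner_apply, Matrix.trace, Matrix.diag,
      Matrix.mul_apply, u, v, starRingEnd_apply, star_star]
    rw [Fintype.sum_prod_type]
    exact Finset.sum_congr rfl fun i _ => Finset.sum_congr rfl fun j _ => mul_comm _ _
  have hu : ‖u‖ = Real.sqrt ((Matrix.trace (Pᴴ * P)).re) := by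
    rw [EuclideanSpace.norm_eq, trace_conj_self_re]
    congr 1
    exact Finset.sum_congr rfl fun p _ => by simp [u]
  have hv : ‖v‖ = Real.sqrt ((Matrix.trace (Qᴴ * Q)).re) := by
    rw [EuclideanSpace.norm_eq, trace_conj_self_re, Fintype.sum_prod_type,
      Fintype.sum_prod_type, Finset.sum_comm]
  calc ‖Matrix.trace (P * Q)‖ = ‖(inner ℂ u v : ℂ)‖ := by
        rw [hinner]
    _ ≤ ‖u‖ * ‖v‖ := norm_inner_le_norm u v
    _ = _ := by rw [hu, hv]

end Aux


theorem stmt6 {n : Type*} [Fintype n] [DecidableEq n]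
    {A B : Matrix n n ℂ} (hA : A.PosDef) (hB : B.PosDef) :
    (Matrix.trace (mpow (mpow A (1/2) * B * mpow A (1/2)) (1/2))).re
      ≥ (Matrix.trace (mpow A (1/2) * mpow B (1/2))).re
    ∧ db A B ≤ dh A B := by
  have hA2 := mpow_posDef hA (1/2)
  set sA := mpow A (1/2) with hsA
  set sB := mpow B (1/2) with hsB
  set X := sA * sB with hXdef
  set M := sA * B * sA with hMdef
  have hM : M.PosDef := by
    have h : M = sA * B * sAᴴ := by rw [hMdef, (mpow_isHermitian hA.1 (1/2)).eq]
    rw [h]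
    exact posDef_conj hB hA2.isUnit
  have hBB : sB * sB = B := by
    rw [hsB, mpow_mul_mpow hB]
    norm_num
    exact mpow_one hB.1
  have hXXH : X * Xᴴ = M := by
    rw [hXdef, Matrix.conjTranspose_mul, (mpow_isHermitian hA.1 (1/2)).eq,
      (mpow_isHermitian hB.1 (1/2)).eq, hMdef]
    simp only [mul_assoc]
    rw [← mul_assoc sB sB sA, hBB]
  set P := mpow M (1/4) with hP
  set Q := mpow M (-(1/4)) * X with hQ
  have hPQ : P * Q = X := by
    rw [hP, hQ, ← mul_assoc, mpow_mul_mpow hM]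
    norm_num
    rw [mpow_zero hM.1, one_mul]
  have hPP : Pᴴ * P = mpow M (1/2) := by
    rw [hP, (mpow_isHermitian hM.1 _).eq, mpow_mul_mpow hM]
    norm_num
  have hQQ : Matrix.trace (Qᴴ * Q) = Matrix.trace (mpow M (1/2)) := by
    rw [hQ, Matrix.conjTranspose_mul, (mpow_isHermitian hM.1 _).eq]
    have h1 : Xᴴ * mpow M (-(1/4)) * (mpow M (-(1/4)) * X)
        = Xᴴ * (mpow M (-(1/2)) * X) := by
      rw [mul_assoc, ← mul_assoc (mpow M (-(1/4))), mpow_mul_mpow hM]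
      norm_num
    rw [h1, Matrix.trace_mul_comm, mul_assoc, hXXH]
    nth_rewrite 2 [← mpow_one hM.1]
    rw [mpow_mul_mpow hM]
    norm_num
  have ht0 : 0 ≤ (Matrix.trace (mpow M (1/2))).re := by
    rw [← hPP, trace_conj_self_re]
    positivity
  have key : ‖Matrix.trace X‖ ≤ (Matrix.trace (mpow M (1/2))).re := by
    have h := trace_cs P Q
    rw [hPQ, hPP, hQQ, Real.mul_self_sqrt ht0] at h
    exact h
  have part1 : (Matrix.trace (mpow M (1/2))).re ≥ (Matrix.trace X).re :=
    le_trans (Complex.re_le_norm _) key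
  refine ⟨part1, ?_⟩
  simp only [db, dh]
  apply Real.sqrt_le_sqrt
  have : (Matrix.trace (mpow (mpow A (1/2) * B * mpow A (1/2)) (1/2))).re
      = (Matrix.trace (mpow M (1/2))).re := by rw [← hMdef]
  rw [this]
  have h2 : (Matrix.trace (mpow A (1/2) * mpow B (1/2))).re = (Matrix.trace X).re := by
    rw [hXdef, ← hsA, ← hsB]
  rw [h2]
  linarith
end

section
/- For positive definite n×n matrices A and B and 0 ≤ t ≤ 1, d_l(A♯B, H_t(A,B)) ≤ (1/2) d_l(A,B), where H_t(A,B) = t(A♯B) + (1-t)(A+B)/2 is the weighted Heron mean and d_l is the Log-Determinant metric. -/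
open Matrix ComplexOrder

section helpers

variable {n : Type*} [Fintype n] [DecidableEq n]

lemma st18_div_two (X : Matrix n n ℂ) : X / 2 = ((1/2:ℝ):ℂ) • X := by
  rw [div_eq_mul_inv]
  have h2 : (2 : Matrix n n ℂ)⁻¹ = ((1/2:ℝ):ℂ) • 1 := by
    apply Matrix.inv_eq_right_inv
    rw [mul_smul_comm, mul_one,
      show (2:Matrix n n ℂ) = (1:Matrix n n ℂ) + 1 from one_add_one_eq_two.symm, smul_add]
    push_cast
    rw [← add_smul]
    norm_num
  rw [h2, mul_smul_comm, mul_one]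

lemma st18_det_re_pos {X : Matrix n n ℂ} (hX : X.PosDef) : 0 < X.det.re := by
  have := hX.det_pos; rw [Complex.lt_def] at this; simpa using this.1

lemma st18_det_eq_re {X : Matrix n n ℂ} (hX : X.PosDef) : X.det = (X.det.re : ℂ) := by
  have := hX.det_pos; rw [Complex.lt_def] at this
  exact Complex.ext rfl (by simpa using this.2.symm)

lemma st18_smul_posSemidef {c : ℝ} (hc : 0 ≤ c) {X : Matrix n n ℂ} (hX : X.PosSemidef) :
    ((c:ℂ) • X).PosSemidef := by
  refine Matrix.PosSemidef.of_dotProduct_mulVec_nonneg ?_ ?_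
  · show ((c:ℂ) • X)ᴴ = _
    rw [conjTranspose_smul, hX.1.eq]
    congr 1
    simp [Complex.star_def, Complex.conj_ofReal]
  · intro x
    rw [smul_mulVec, dotProduct_smul, smul_eq_mul]
    exact mul_nonneg (Complex.zero_le_real.mpr hc) (hX.dotProduct_mulVec_nonneg x)

lemma st18_posDef_conj {X U : Matrix n n ℂ} (hX : X.PosDef) (hU : IsUnit U) :
    (U * X * Uᴴ).PosDef := by
  have hsd := hX.posSemidef.mul_mul_conjTranspose_same U
  have hUH : IsUnit Uᴴ := by
    rw [Matrix.isUnit_iff_isUnit_det, Matrix.det_conjTranspose, isUnit_iff_ne_zero]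
    simpa [star_eq_zero] using ((Matrix.isUnit_iff_isUnit_det U).mp hU).ne_zero
  have hinj := Matrix.mulVec_injective_iff_isUnit.mpr hUH
  simpa using hX.conjTranspose_mul_mul_same (B := Uᴴ) hinj

lemma st18_mpow_eq {X : Matrix n n ℂ} (hX : X.IsHermitian) (p : ℝ) :
    mpow X p = (hX.eigenvectorUnitary : Matrix n n ℂ) *
      Matrix.diagonal (fun i => ((hX.eigenvalues i ^ p : ℝ) : ℂ)) *
      star (hX.eigenvectorUnitary : Matrix n n ℂ) := by
  rw [mpow, dif_pos hX]

lemma st18_mpow_mul {X : Matrix n n ℂ} (hX : X.PosDef) (p q : ℝ) :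
    mpow X p * mpow X q = mpow X (p + q) := by
  rw [st18_mpow_eq hX.1 p, st18_mpow_eq hX.1 q, st18_mpow_eq hX.1 (p+q)]
  set U : Matrix n n ℂ := (hX.1.eigenvectorUnitary : Matrix n n ℂ) with hUdef
  have hU2 : star U * U = 1 := Matrix.mem_unitaryGroup_iff'.mp hX.1.eigenvectorUnitary.2
  simp only [mul_assoc]
  rw [← mul_assoc (star U) U, hU2, one_mul, ← mul_assoc (Matrix.diagonal _) (Matrix.diagonal _),
    diagonal_mul_diagonal]
  have hfun : (fun i => ((hX.1.eigenvalues i ^ p : ℝ) : ℂ) * ((hX.1.eigenvalues i ^ q : ℝ) : ℂ))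
      = fun i => ((hX.1.eigenvalues i ^ (p + q) : ℝ) : ℂ) := by
    funext i
    rw [← Complex.ofReal_mul, ← Real.rpow_add (hX.eigenvalues_pos i)]
  rw [hfun]

lemma st18_mpow_one {X : Matrix n n ℂ} (hX : X.IsHermitian) : mpow X 1 = X := by
  rw [st18_mpow_eq hX]
  simp only [Real.rpow_one]
  exact hX.spectral_theorem.symm

lemma st18_mpow_zero {X : Matrix n n ℂ} (hX : X.IsHermitian) : mpow X 0 = 1 := by
  rw [st18_mpow_eq hX]
  have hU1 : (hX.eigenvectorUnitary : Matrix n n ℂ) * star (hX.eigenvectorUnitary : Matrix n n ℂ) = 1 :=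
    Matrix.mem_unitaryGroup_iff.mp hX.eigenvectorUnitary.2
  simp only [Real.rpow_zero, Complex.ofReal_one]
  rw [show (Matrix.diagonal (fun _ : n => (1:ℂ))) = 1 from Matrix.diagonal_one, mul_one, hU1]

lemma st18_mpow_posDef {X : Matrix n n ℂ} (hX : X.PosDef) (p : ℝ) : (mpow X p).PosDef := by
  rw [st18_mpow_eq hX.1]
  have hU1 : (hX.1.eigenvectorUnitary : Matrix n n ℂ) * star (hX.1.eigenvectorUnitary : Matrix n n ℂ) = 1 :=
    Matrix.mem_unitaryGroup_iff.mp hX.1.eigenvectorUnitary.2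
  have hd : (Matrix.diagonal (fun i => ((hX.1.eigenvalues i ^ p : ℝ) : ℂ))).PosDef :=
    Matrix.posDef_diagonal_iff.mpr fun i =>
      Complex.zero_lt_real.mpr (Real.rpow_pos_of_pos (hX.eigenvalues_pos i) p)
  exact st18_posDef_conj hd ((Matrix.isUnit_iff_isUnit_det _).mpr
    (IsUnit.of_mul_eq_one _ (by rw [← det_mul, hU1, det_one])))

lemma st18_mpow_det {X : Matrix n n ℂ} (hX : X.PosDef) (p : ℝ) :
    (mpow X p).det = ((X.det.re ^ p : ℝ) : ℂ) := by
  rw [st18_mpow_eq hX.1, Matrix.det_mul_right_comm,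
    Matrix.mem_unitaryGroup_iff.mp hX.1.eigenvectorUnitary.2, one_mul, det_diagonal]
  have h0 : X.det = ((∏ i, hX.1.eigenvalues i : ℝ) : ℂ) := by
    rw [hX.1.det_eq_prod_eigenvalues]; push_cast; rfl
  have h1 : X.det.re = ∏ i, hX.1.eigenvalues i := by rw [h0, Complex.ofReal_re]
  rw [h1, ← Real.finset_prod_rpow _ _ (fun i _ => (hX.eigenvalues_pos i).le)]
  push_cast
  rfl

lemma st18_det_one_add {Q : Matrix n n ℂ} (hQ : Q.PosSemidef) :
    ∃ r : ℝ, 1 ≤ r ∧ (1 + Q).det = (r:ℂ) := by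
  set U : Matrix n n ℂ := (hQ.1.eigenvectorUnitary : Matrix n n ℂ) with hUdef
  have hU1 : U * star U = 1 := Matrix.mem_unitaryGroup_iff.mp hQ.1.eigenvectorUnitary.2
  have hsp := hQ.1.spectral_theorem
  simp only [Unitary.conjStarAlgAut_apply, Unitary.coe_star] at hsp
  have key : 1 + Q = U * (1 + Matrix.diagonal (RCLike.ofReal ∘ hQ.1.eigenvalues)) * star U := by
    rw [Matrix.mul_add, Matrix.add_mul, mul_one, hU1, ← hsp]
  refine ⟨∏ i, (1 + hQ.1.eigenvalues i), ?_, ?_⟩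
  · calc (1:ℝ) = ∏ _i : n, (1:ℝ) := by simp
      _ ≤ ∏ i, (1 + hQ.1.eigenvalues i) := Finset.prod_le_prod (fun i _ => zero_le_one)
          (fun i _ => by linarith [hQ.eigenvalues_nonneg i])
  · rw [key, Matrix.det_mul_right_comm, hU1, one_mul]
    rw [show (1 : Matrix n n ℂ) + Matrix.diagonal (RCLike.ofReal ∘ hQ.1.eigenvalues)
        = Matrix.diagonal (fun i => 1 + ((hQ.1.eigenvalues i : ℝ) : ℂ)) from ?_]
    · rw [det_diagonal]
      push_cast
      rfl
    · rw [← Matrix.diagonal_one, Matrix.diagonal_add]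
      rfl

lemma st18_det_mono {X P : Matrix n n ℂ} (hX : X.PosDef) (hP : P.PosSemidef) :
    X.det.re ≤ (X + P).det.re := by
  set W := mpow X (1/2) with hW
  set Wi := mpow X (-(1/2)) with hWi
  have hWpd := st18_mpow_posDef hX (1/2)
  have hWipd := st18_mpow_posDef hX (-(1/2))
  have hWWi : W * Wi = 1 := by
    rw [hW, hWi, st18_mpow_mul hX]; norm_num; exact st18_mpow_zero hX.1
  have hWiW : Wi * W = 1 := by
    rw [hW, hWi, st18_mpow_mul hX]; norm_num; exact st18_mpow_zero hX.1
  have hWW : W * W = X := by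
    rw [hW, st18_mpow_mul hX]; norm_num; exact st18_mpow_one hX.1
  have hQ : (Wi * P * Wiᴴ).PosSemidef := hP.mul_mul_conjTranspose_same Wi
  rw [hWipd.1.eq, ← hWi] at hQ
  have key : X + P = W * (1 + Wi * P * Wi) * W := by
    have h1 : W * (1 + Wi * P * Wi) * W = W * W + W * Wi * P * (Wi * W) := by noncomm_ring
    rw [h1, hWW, hWWi, hWiW, one_mul, mul_one]
  obtain ⟨r, hr, hdet⟩ := st18_det_one_add hQ
  have hWdet := st18_mpow_det hX (1/2)
  rw [key, det_mul, det_mul, hW, hWdet, hdet]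
  have ha := st18_det_re_pos hX
  have h2 : X.det.re ^ ((1:ℝ)/2) * X.det.re ^ ((1:ℝ)/2) = X.det.re := by
    rw [← Real.rpow_add ha]; norm_num
  have h3 : ((X.det.re ^ ((1:ℝ)/2) : ℝ) : ℂ) * (r:ℂ) * ((X.det.re ^ ((1:ℝ)/2) : ℝ) : ℂ)
      = ((X.det.re ^ ((1:ℝ)/2) * r * X.det.re ^ ((1:ℝ)/2) : ℝ) : ℂ) := by push_cast; ring
  rw [h3, Complex.ofReal_re]
  nlinarith [h2, hr, Real.rpow_pos_of_pos ha ((1:ℝ)/2)]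

end helpers

theorem stmt18 {n : Type*} [Fintype n] [DecidableEq n]
    {A B : Matrix n n ℂ} (hA : A.PosDef) (hB : B.PosDef)
    {t : ℝ} (ht0 : 0 ≤ t) (ht1 : t ≤ 1) :
    dl (sharp (1/2) A B) ((t : ℂ) • sharp (1/2) A B + ((1 - t : ℝ) : ℂ) • ((A + B) / 2))
      ≤ (1/2) * dl A B := by
  set G := sharp (1/2) A B with hGdef
  set S := mpow A (1/2) with hSdef
  set T := mpow A (-(1/2)) with hTdef
  have hSpd : S.PosDef := st18_mpow_posDef hA _
  have hTpd : T.PosDef := st18_mpow_posDef hA _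
  have hST : S * T = 1 := by
    rw [hSdef, hTdef, st18_mpow_mul hA]; norm_num; exact st18_mpow_zero hA.1
  have hTS : T * S = 1 := by
    rw [hSdef, hTdef, st18_mpow_mul hA]; norm_num; exact st18_mpow_zero hA.1
  have hSS : S * S = A := by
    rw [hSdef, st18_mpow_mul hA]; norm_num; exact st18_mpow_one hA.1
  have hCpd : (T * B * T).PosDef := by
    have h := st18_posDef_conj hB hTpd.isUnit
    rwa [hTpd.1.eq] at h
  set C := T * B * T with hCdef
  set R := mpow C (1/2) with hRdef
  have hRpd : R.PosDef := st18_mpow_posDef hCpd _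
  have hRR : R * R = C := by
    rw [hRdef, st18_mpow_mul hCpd]; norm_num; exact st18_mpow_one hCpd.1
  have hGeq : G = S * R * S := rfl
  have hGpd : G.PosDef := by
    rw [hGeq]
    have h := st18_posDef_conj hRpd hSpd.isUnit
    rwa [hSpd.1.eq] at h
  set D := S * (((1/2:ℝ):ℂ) • ((1 - R) * (1 - R))) * S with hDdef
  have hDpsd : D.PosSemidef := by
    have h1 : ((1:Matrix n n ℂ) - R).IsHermitian := Matrix.isHermitian_one.sub hRpd.1
    have h2 : ((1 - R) * (1 - R)).PosSemidef := by
      have h := Matrix.posSemidef_conjTranspose_mul_self ((1:Matrix n n ℂ) - R)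
      rwa [h1.eq] at h
    have h3 := st18_smul_posSemidef (by norm_num : (0:ℝ) ≤ 1/2) h2
    have h4 := h3.mul_mul_conjTranspose_same S
    rwa [hSpd.1.eq] at h4
  have hSCS : S * C * S = B := by
    rw [hCdef]
    calc S * (T * B * T) * S = (S * T) * B * (T * S) := by noncomm_ring
    _ = B := by rw [hST, hTS, one_mul, mul_one]
  have hGD : G + D = ((1/2:ℝ):ℂ) • (A + B) := by
    have e : ((1:Matrix n n ℂ) - R) * (1 - R) = 1 - R - R + R * R := by noncomm_ring
    have h1 : R + ((1/2:ℝ):ℂ) • (((1:Matrix n n ℂ) - R) * (1 - R))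
        = ((1/2:ℝ):ℂ) • (1 + R * R) := by
      rw [e]; push_cast; module
    calc G + D = S * (R + ((1/2:ℝ):ℂ) • ((1 - R) * (1 - R))) * S := by
          rw [hGeq, hDdef]; simp only [Matrix.mul_add, Matrix.add_mul]
    _ = S * (((1/2:ℝ):ℂ) • (1 + R * R)) * S := by rw [h1]
    _ = ((1/2:ℝ):ℂ) • (S * (1 + R * R) * S) := by rw [mul_smul_comm, smul_mul_assoc]
    _ = ((1/2:ℝ):ℂ) • (S * S + S * (R * R) * S) := by
          simp only [Matrix.mul_add, Matrix.add_mul, Matrix.mul_one]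
    _ = ((1/2:ℝ):ℂ) • (A + B) := by rw [hRR, hSS, hSCS]
  have hABdiv : (A + B) / 2 = G + D := by rw [st18_div_two, hGD]
  -- determinants
  have a_pos := st18_det_re_pos hA
  have b_pos := st18_det_re_pos hB
  have hCdet : C.det = ((A.det.re ^ (-(1/2):ℝ) * B.det.re * A.det.re ^ (-(1/2):ℝ) : ℝ) : ℂ) := by
    rw [hCdef, det_mul, det_mul, hTdef, st18_mpow_det hA, st18_det_eq_re hB]
    simp only [Complex.ofReal_re]
    push_cast; ring
  have hCre : C.det.re = A.det.re ^ (-(1/2):ℝ) * B.det.re * A.det.re ^ (-(1/2):ℝ) := by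
    rw [hCdet, Complex.ofReal_re]
  have hc_pos : 0 < C.det.re := st18_det_re_pos hCpd
  have hGdet : G.det = ((A.det.re ^ ((1:ℝ)/2) * C.det.re ^ ((1:ℝ)/2) * A.det.re ^ ((1:ℝ)/2) : ℝ) : ℂ) := by
    rw [hGeq, det_mul, det_mul, hSdef, hRdef, st18_mpow_det hA, st18_mpow_det hCpd]
    push_cast; ring
  have hGre : G.det.re = A.det.re ^ ((1:ℝ)/2) * C.det.re ^ ((1:ℝ)/2) * A.det.re ^ ((1:ℝ)/2) := by
    rw [hGdet, Complex.ofReal_re]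
  have hlogG : Real.log G.det.re = (1/2) * (Real.log A.det.re + Real.log B.det.re) := by
    have hra : (0:ℝ) < A.det.re ^ (-(1/2):ℝ) := Real.rpow_pos_of_pos a_pos _
    have hlogC : Real.log C.det.re = Real.log B.det.re - Real.log A.det.re := by
      rw [hCre, Real.log_mul (mul_ne_zero hra.ne' b_pos.ne') hra.ne',
        Real.log_mul hra.ne' b_pos.ne', Real.log_rpow a_pos]
      ring
    have h12 : (0:ℝ) < A.det.re ^ ((1:ℝ)/2) := Real.rpow_pos_of_pos a_pos _
    have hc12 : (0:ℝ) < C.det.re ^ ((1:ℝ)/2) := Real.rpow_pos_of_pos hc_pos _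
    rw [hGre, Real.log_mul (mul_ne_zero h12.ne' hc12.ne') h12.ne',
      Real.log_mul h12.ne' hc12.ne', Real.log_rpow a_pos, Real.log_rpow hc_pos, hlogC]
    ring
  -- the interpolated matrix
  set Z := (t : ℂ) • G + ((1 - t : ℝ) : ℂ) • ((A + B) / 2) with hZdef
  have hZ : Z = G + (((1 - t : ℝ)) : ℂ) • D := by
    rw [hZdef, hABdiv]; push_cast; module
  have hK : (G + Z) / 2 = G + (((1 - t)/2 : ℝ) : ℂ) • D := by
    rw [st18_div_two, hZ]; push_cast; module
  have hZK : Z = (G + (((1 - t)/2 : ℝ) : ℂ) • D) + (((1 - t)/2 : ℝ) : ℂ) • D := by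
    rw [hZ]; push_cast; module
  have hMZ : G + D = Z + ((t : ℝ) : ℂ) • D := by
    rw [hZ]; push_cast; module
  have hD1 := st18_smul_posSemidef (show (0:ℝ) ≤ (1 - t)/2 by linarith) hDpsd
  have hD2 := st18_smul_posSemidef ht0 hDpsd
  have hD3 := st18_smul_posSemidef (show (0:ℝ) ≤ 1 - t by linarith) hDpsd
  have hKpd : (G + (((1 - t)/2 : ℝ) : ℂ) • D).PosDef := hGpd.add_posSemidef hD1
  have hZpd : Z.PosDef := by rw [hZ]; exact hGpd.add_posSemidef hD3
  have hMpd : (G + D).PosDef := hGpd.add_posSemidef hDpsd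
  have h1 : ((G + Z) / 2).det.re ≤ Z.det.re := by
    have h := st18_det_mono hKpd hD1
    rw [← hZK] at h
    rw [hK]
    exact h
  have h2 : Z.det.re ≤ (G + D).det.re := by
    have h := st18_det_mono hZpd hD2
    rwa [← hMZ] at h
  have hKpos : 0 < ((G + Z) / 2).det.re := by rw [hK]; exact st18_det_re_pos hKpd
  have hle1 : Real.log (((G + Z) / 2).det.re) ≤ Real.log Z.det.re := Real.log_le_log hKpos h1
  have hle2 : Real.log Z.det.re ≤ Real.log (G + D).det.re :=
    Real.log_le_log (st18_det_re_pos hZpd) h2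
  simp only [dl]
  rw [hABdiv]
  linarith [hlogG, hle1, hle2]
end
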